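/- Assume (D+) and let (V,u) satisfy the monomer-equation setting with total mass M. If V(0) < d(0) and M > d(0), then there exists t* ∈ (0,∞) such that V(t*) = d(0) and V'(t*) > 0. -/

import Mathlib

open Set Filter Topology MeasureTheory

/-- Assumption (D+): `d : [0,∞) → [0,∞)` is C¹ with `0 < α ≤ d'(x) ≤ β` for all `x ≥ 0`. -/
structure DPlus (d d' : ℝ → ℝ) (α β : ℝ) : Prop where
  nonneg : ∀ x ∈ Set.Ici (0:ℝ), 0 ≤ d x
  hasDeriv : ∀ x ∈ Set.Ici (0:ℝ), HasDerivWithinAt d (d' x) (Set.Ici 0) x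
  contDeriv : ContinuousOn d' (Set.Ici 0)
  alpha_pos : 0 < α
  deriv_lb : ∀ x ∈ Set.Ici (0:ℝ), α ≤ d' x
  deriv_ub : ∀ x ∈ Set.Ici (0:ℝ), d' x ≤ β

/-- The monomer-equation setting with total mass `M`: `V` is C¹ (derivative `V'`) and
bounded, `u(t,·) ≥ 0` with `(1+x)u(t,x)` integrable, the moments
`t ↦ ∫₀^∞ u(t,x) dx` and `t ↦ ∫₀^∞ d(x)u(t,x) dx` are continuous,
`V' = −V ∫u + ∫ d u`, and `V(t) + ∫₀^∞ x u(t,x) dx = M`. -/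
structure MonomerSetting (d : ℝ → ℝ) (M : ℝ) (V V' : ℝ → ℝ) (u : ℝ → ℝ → ℝ) : Prop where
  V_hasDeriv : ∀ t ∈ Set.Ici (0:ℝ), HasDerivWithinAt V (V' t) (Set.Ici 0) t
  V'_cont : ContinuousOn V' (Set.Ici 0)
  V_bdd : ∃ K : ℝ, ∀ t ∈ Set.Ici (0:ℝ), |V t| ≤ K
  u_nonneg : ∀ t ∈ Set.Ici (0:ℝ), ∀ x ∈ Set.Ici (0:ℝ), 0 ≤ u t x
  u_int : ∀ t ∈ Set.Ici (0:ℝ), IntegrableOn (fun x => (1 + x) * u t x) (Set.Ioi 0)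
  du_int : ∀ t ∈ Set.Ici (0:ℝ), IntegrableOn (fun x => d x * u t x) (Set.Ioi 0)
  rho_cont : ContinuousOn (fun t => ∫ x in Set.Ioi (0:ℝ), u t x) (Set.Ici 0)
  du_cont : ContinuousOn (fun t => ∫ x in Set.Ioi (0:ℝ), d x * u t x) (Set.Ici 0)
  V_ode : ∀ t ∈ Set.Ici (0:ℝ),
    V' t = -V t * (∫ x in Set.Ioi (0:ℝ), u t x) + ∫ x in Set.Ioi (0:ℝ), d x * u t x
  mass : ∀ t ∈ Set.Ici (0:ℝ), V t + ∫ x in Set.Ioi (0:ℝ), x * u t x = M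

/-- Proposition 1.1, case 1: under (D+), in the monomer-equation setting
with total mass `M`, if `V(0) < d(0)` and `M > d(0)` then there is `t* ∈ (0,∞)` with
`V(t*) = d(0)` and `V'(t*) > 0`. -/
theorem monomer_crosses_threshold
    (d d' : ℝ → ℝ) (α β : ℝ) (hD : DPlus d d' α β)
    (M : ℝ) (hM : 0 < M)
    (V V' : ℝ → ℝ) (u : ℝ → ℝ → ℝ)
    (hset : MonomerSetting d M V V' u)
    (hV0 : V 0 < d 0) (hMd : d 0 < M) :
    ∃ tstar : ℝ, 0 < tstar ∧ V tstar = d 0 ∧ 0 < V' tstar := by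
  obtain ⟨hVderiv, hV'cont, hVbdd, hunn, huint, hduint, hrhoc, hduc, hode, hmass⟩ := hset
  have hVcont : ContinuousOn V (Ici (0:ℝ)) := fun t ht => (hVderiv t ht).continuousWithinAt
  -- derivative of d at interior points
  have hd_at : ∀ x ∈ interior (Ici (0:ℝ)), HasDerivAt d (d' x) x := by
    intro x hx
    rw [interior_Ici] at hx
    exact (hD.hasDeriv x (mem_Ici.2 (le_of_lt (mem_Ioi.1 hx)))).hasDerivAt (Ici_mem_nhds hx)
  have hdcont : ContinuousOn d (Ici (0:ℝ)) := fun x hx => (hD.hasDeriv x hx).continuousWithinAt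
  -- the lower bound d x ≥ d 0 + α x on [0,∞)
  have hdlb : ∀ x : ℝ, 0 ≤ x → d 0 + α * x ≤ d x := by
    intro x hx
    have h := Convex.mul_sub_le_image_sub_of_le_deriv (convex_Ici (0:ℝ)) hdcont
      (fun y hy => (hd_at y hy).differentiableAt.differentiableWithinAt)
      (fun y hy => by
        rw [(hd_at y hy).deriv]
        exact hD.deriv_lb y (mem_Ici.2 (le_of_lt (mem_Ioi.1 (by rwa [interior_Ici] at hy)))))
      0 self_mem_Ici x hx hx
    linarith
  -- integrability of u t and of x * u t x on (0,∞)
  have huint' : ∀ t ∈ Ici (0:ℝ), IntegrableOn (fun x => u t x) (Ioi 0) := by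
    intro t ht
    have hcont : Continuous fun x : ℝ => (1 + |x|)⁻¹ :=
      (continuous_const.add continuous_abs).inv₀ (fun x => (by positivity : (0:ℝ) < 1 + |x|).ne')
    have h1 : IntegrableOn (fun x => (1 + |x|)⁻¹ * ((1 + x) * u t x)) (Ioi 0) :=
      Integrable.bdd_mul (c := 1) (huint t ht) hcont.aestronglyMeasurable
        (ae_of_all _ fun x => by
          rw [Real.norm_eq_abs, abs_of_pos (by positivity)]
          exact inv_le_one_of_one_le₀ (le_add_of_nonneg_right (abs_nonneg x)))
    refine h1.congr_fun (fun x hx => ?_) measurableSet_Ioi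
    have hx' : (0:ℝ) < x := hx
    beta_reduce
    rw [abs_of_pos hx']
    field_simp
  have hxint : ∀ t ∈ Ici (0:ℝ), IntegrableOn (fun x => x * u t x) (Ioi 0) := by
    intro t ht
    have hcont : Continuous fun x : ℝ => |x| * (1 + |x|)⁻¹ :=
      continuous_abs.mul ((continuous_const.add continuous_abs).inv₀ (fun x => (by positivity : (0:ℝ) < 1 + |x|).ne'))
    have h1 : IntegrableOn (fun x => (|x| * (1 + |x|)⁻¹) * ((1 + x) * u t x)) (Ioi 0) :=
      Integrable.bdd_mul (c := 1) (huint t ht) hcont.aestronglyMeasurable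
        (ae_of_all _ fun x => by
          have h0 : (0:ℝ) < 1 + |x| := by positivity
          rw [Real.norm_eq_abs, abs_of_nonneg (by positivity)]
          rw [mul_inv_le_iff₀ h0]
          simp [abs_nonneg])
    refine h1.congr_fun (fun x hx => ?_) measurableSet_Ioi
    have hx' : (0:ℝ) < x := hx
    beta_reduce
    rw [abs_of_pos hx']
    field_simp
  -- nonnegativity of ρ
  have hrho_nn : ∀ t ∈ Ici (0:ℝ), 0 ≤ ∫ x in Ioi (0:ℝ), u t x := by
    intro t ht
    exact setIntegral_nonneg measurableSet_Ioi (fun x hx => hunn t ht x (mem_Ici.2 (le_of_lt (mem_Ioi.1 hx))))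
  -- the key differential inequality
  have key : ∀ t ∈ Ici (0:ℝ),
      (d 0 - V t) * (∫ x in Ioi (0:ℝ), u t x) + α * (M - V t) ≤ V' t := by
    intro t ht
    have hmass' : (∫ x in Ioi (0:ℝ), x * u t x) = M - V t := by linarith [hmass t ht]
    have hmono : (∫ x in Ioi (0:ℝ), (d 0 * u t x + α * (x * u t x)))
        ≤ ∫ x in Ioi (0:ℝ), d x * u t x := by
      refine setIntegral_mono_on
        (((huint' t ht).const_mul (d 0)).add ((hxint t ht).const_mul α))
        (hduint t ht) measurableSet_Ioi (fun x hx => ?_)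
      have hx0 : (0:ℝ) ≤ x := le_of_lt hx
      have hu := hunn t ht x hx0
      have hd := hdlb x hx0
      nlinarith
    rw [integral_add ((huint' t ht).const_mul (d 0)) ((hxint t ht).const_mul α),
        integral_const_mul, integral_const_mul, hmass'] at hmono
    rw [hode t ht]
    have hexp : (d 0 - V t) * (∫ x in Ioi (0:ℝ), u t x)
        = d 0 * (∫ x in Ioi (0:ℝ), u t x) + (-V t) * (∫ x in Ioi (0:ℝ), u t x) := by ring
    linarith [hexp, hmono]
  have hc : 0 < α * (M - d 0) := mul_pos hD.alpha_pos (by linarith)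
  -- derivative of V at interior points
  have hVd : ∀ x ∈ interior (Ici (0:ℝ)), HasDerivAt V (V' x) x := by
    intro x hx
    rw [interior_Ici] at hx
    exact (hVderiv x (mem_Ici.2 (le_of_lt (mem_Ioi.1 hx)))).hasDerivAt (Ici_mem_nhds hx)
  -- there is a time at which V reaches d 0
  have hex : ∃ T : ℝ, 0 < T ∧ d 0 ≤ V T := by
    by_contra h
    push_neg at h
    have hVlt : ∀ t : ℝ, 0 ≤ t → V t < d 0 := by
      intro t ht
      rcases eq_or_lt_of_le ht with h'|h'
      · rw [← h']; exact hV0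
      · exact h t h'
    have hlow : ∀ x ∈ interior (Ici (0:ℝ)), α * (M - d 0) ≤ deriv V x := by
      intro x hx
      rw [(hVd x hx).deriv]
      have hx0 : (0:ℝ) ≤ x := le_of_lt (by rwa [interior_Ici] at hx)
      have hk := key x hx0
      have hρ := hrho_nn x hx0
      have h1 : V x < d 0 := hVlt x hx0
      have h2 : 0 ≤ (d 0 - V x) * ∫ x_1 in Ioi (0:ℝ), u x x_1 :=
        mul_nonneg (by linarith) hρ
      have h3 : α * (M - d 0) ≤ α * (M - V x) :=
        mul_le_mul_of_nonneg_left (by linarith) (le_of_lt hD.alpha_pos)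
      linarith
    have hdiv : 0 ≤ (d 0 - V 0) / (α * (M - d 0)) := div_nonneg (by linarith) (le_of_lt hc)
    have hT : (0:ℝ) ≤ (d 0 - V 0) / (α * (M - d 0)) + 1 := by linarith
    have hMV := Convex.mul_sub_le_image_sub_of_le_deriv (convex_Ici (0:ℝ)) hVcont
      (fun x hx => (hVd x hx).differentiableAt.differentiableWithinAt) hlow
      0 self_mem_Ici ((d 0 - V 0) / (α * (M - d 0)) + 1) hT hT
    have hcT : α * (M - d 0) * ((d 0 - V 0) / (α * (M - d 0)) + 1 - 0)
        = (d 0 - V 0) + α * (M - d 0) := by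
      rw [sub_zero, mul_add, mul_div_cancel₀ _ hc.ne', mul_one]
    have hlt : d 0 < V ((d 0 - V 0) / (α * (M - d 0)) + 1) := by linarith
    exact absurd hlt (not_lt.2 (le_of_lt (hVlt _ hT)))
  obtain ⟨T, hT0, hTd⟩ := hex
  have hsub : Icc (0:ℝ) T ⊆ Ici 0 := fun x hx => hx.1
  obtain ⟨tstar, htmem, hteq⟩ :=
    intermediate_value_Icc (le_of_lt hT0) (hVcont.mono hsub) ⟨le_of_lt hV0, hTd⟩
  have ht0 : 0 < tstar := by
    rcases eq_or_lt_of_le htmem.1 with h'|h'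
    · exfalso; rw [← h'] at hteq; linarith
    · exact h'
  refine ⟨tstar, ht0, hteq, ?_⟩
  have hk := key tstar (le_of_lt ht0)
  rw [hteq] at hk
  simp only [sub_self, zero_mul, zero_add] at hk
  linarith
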